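/- Let G be a group generated by elements g_1, ..., g_r, each of which is conjugate to a fixed element m. Let ρ : G → GL(V) be an irreducible representation on an n-dimensional complex vector space V such that ρ(m) is diagonalizable with eigenvalue 1 of multiplicity n−1 (and one eigenvalue μ₀ ≠ 1). Then n ≤ r. -/
import Mathlib


open Matrix

/-- If a group `G` is generated by `r` elements, each conjugate to a
fixed element `m`, and `ρ : G → GL_n(ℂ)` is an irreducible representation such
that `ρ m` is diagonalizable with eigenvalue `1` of multiplicity `n - 1` and one
eigenvalue `μ₀ ≠ 1`, then `n ≤ r`. -/
lemma aux_finrank {V : Type*} [AddCommGroup V] [Module ℂ V] [FiniteDimensional ℂ V] :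
    ∀ (r : ℕ) (K : Fin r → Submodule ℂ V),
      (∀ i, Module.finrank ℂ V ≤ Module.finrank ℂ (K i) + 1) →
      Module.finrank ℂ V ≤ Module.finrank ℂ ↥(⨅ i, K i) + r := by
  intro r
  induction r with
  | zero =>
    intro K _
    rw [iInf_of_empty, finrank_top]
    simp
  | succ r ih =>
    intro K hK
    have h0 := hK 0
    have hW := ih (fun i => K i.succ) (fun i => hK i.succ)
    beta_reduce at hW
    have heq : (⨅ i, K i) = K 0 ⊓ ⨅ i : Fin r, K i.succ := by
      apply le_antisymm
      · exact le_inf (iInf_le _ 0) (le_iInf fun i => iInf_le _ i.succ)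
      · exact le_iInf fun i =>
          Fin.cases inf_le_left (fun j => inf_le_right.trans (iInf_le _ j)) i
    have hsum := Submodule.finrank_sup_add_finrank_inf_eq (K 0) (⨅ i : Fin r, K i.succ)
    have hsup : Module.finrank ℂ ↥(K 0 ⊔ ⨅ i : Fin r, K i.succ) ≤ Module.finrank ℂ V :=
      Submodule.finrank_le _
    rw [heq]
    omega

theorem stmt0 {G : Type*} [Group G] (m : G) (r n : ℕ)
    (g : Fin r → G) (w : Fin r → G)
    (hconj : ∀ i, g i = w i * m * (w i)⁻¹)
    (hgen : Subgroup.closure (Set.range g) = ⊤)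
    (ρ : G →* Matrix.GeneralLinearGroup (Fin n) ℂ)
    (μ₀ : ℂ) (hμ₀ : μ₀ ≠ 1)
    (P : Matrix.GeneralLinearGroup (Fin n) ℂ)
    (hdiag : (ρ m : Matrix (Fin n) (Fin n) ℂ) =
      (P : Matrix (Fin n) (Fin n) ℂ) *
        Matrix.diagonal (fun i : Fin n => if (i : ℕ) = 0 then μ₀ else 1) *
        (↑(P⁻¹) : Matrix (Fin n) (Fin n) ℂ))
    (hirr : ∀ U : Submodule ℂ (Fin n → ℂ),
      (∀ x ∈ U, ∀ γ : G, (ρ γ : Matrix (Fin n) (Fin n) ℂ) *ᵥ x ∈ U) →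
      U = ⊥ ∨ U = ⊤) :
    n ≤ r := by
  rcases Nat.eq_zero_or_pos n with hn | hn
  · omega
  -- Step 1: fixed vectors of all generators are fixed by the whole group
  have key : ∀ x : Fin n → ℂ, (∀ i, (ρ (g i) : Matrix (Fin n) (Fin n) ℂ) *ᵥ x = x) →
      ∀ γ : G, (ρ γ : Matrix (Fin n) (Fin n) ℂ) *ᵥ x = x := by
    intro x hx γ
    let H : Subgroup G :=
      { carrier := {γ | (ρ γ : Matrix (Fin n) (Fin n) ℂ) *ᵥ x = x}
        one_mem' := by simp
        mul_mem' := by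
          intro a b ha hb
          simp only [Set.mem_setOf_eq] at *
          rw [_root_.map_mul, Units.val_mul, ← mulVec_mulVec, hb, ha]
        inv_mem' := by
          intro a ha
          simp only [Set.mem_setOf_eq] at *
          conv_lhs => rw [← ha]
          rw [mulVec_mulVec, ← Units.val_mul, ← _root_.map_mul, inv_mul_cancel, _root_.map_one,
            Units.val_one, one_mulVec] }
    have hle : Subgroup.closure (Set.range g) ≤ H :=
      (Subgroup.closure_le H).mpr (by rintro _ ⟨i, rfl⟩; exact hx i)
    rw [hgen] at hle
    exact hle (Subgroup.mem_top γ)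
  -- Step 2: the matrices ρ(g i) - 1 have rank ≤ 1
  set A : Fin r → Matrix (Fin n) (Fin n) ℂ :=
    fun i => (ρ (g i) : Matrix (Fin n) (Fin n) ℂ) - 1 with hA
  have hPinv : (P : Matrix (Fin n) (Fin n) ℂ) * (↑(P⁻¹) : Matrix (Fin n) (Fin n) ℂ) = 1 := by
    rw [← Units.val_mul, mul_inv_cancel, Units.val_one]
  have hPinv' : (↑(P⁻¹) : Matrix (Fin n) (Fin n) ℂ) * (P : Matrix (Fin n) (Fin n) ℂ) = 1 := by
    rw [← Units.val_mul, inv_mul_cancel, Units.val_one]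
  have hm1 : (ρ m : Matrix (Fin n) (Fin n) ℂ) - 1 =
      (P : Matrix (Fin n) (Fin n) ℂ) *
        Matrix.diagonal (fun i : Fin n => if (i : ℕ) = 0 then μ₀ - 1 else 0) *
        (↑(P⁻¹) : Matrix (Fin n) (Fin n) ℂ) := by
    have hfun : (fun i : Fin n => if (i : ℕ) = 0 then μ₀ - 1 else 0) =
        (fun i : Fin n => (if (i : ℕ) = 0 then μ₀ else 1) - 1) := by
      funext i; split <;> ring
    rw [hfun]
    have : Matrix.diagonal (fun i : Fin n => (if (i : ℕ) = 0 then μ₀ else 1) - 1) =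
        Matrix.diagonal (fun i : Fin n => if (i : ℕ) = 0 then μ₀ else 1) - 1 := by
      rw [← Matrix.diagonal_one, Matrix.diagonal_sub]
    rw [this, mul_sub, sub_mul, mul_one, hPinv, ← hdiag]
  have hrankdiag :
      (Matrix.diagonal (fun i : Fin n => if (i : ℕ) = 0 then μ₀ - 1 else 0)).rank ≤ 1 := by
    rw [Matrix.rank_diagonal]
    rw [Fintype.card_le_one_iff]
    rintro ⟨a, ha⟩ ⟨b, hb⟩
    have ha' : (a : ℕ) = 0 := by by_contra h; simp [h] at ha
    have hb' : (b : ℕ) = 0 := by by_contra h; simp [h] at hb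
    ext
    simp [Fin.ext_iff, ha', hb']
  have hrank : ∀ i, (A i).rank ≤ 1 := by
    intro i
    have hgi : (ρ (g i) : Matrix (Fin n) (Fin n) ℂ) =
        (ρ (w i) : Matrix (Fin n) (Fin n) ℂ) * (ρ m : Matrix (Fin n) (Fin n) ℂ) *
          ((ρ ((w i)⁻¹) : Matrix (Fin n) (Fin n) ℂ)) := by
      rw [hconj i, _root_.map_mul, _root_.map_mul, Units.val_mul, Units.val_mul]
    have hwinv : (ρ (w i) : Matrix (Fin n) (Fin n) ℂ) *
        ((ρ ((w i)⁻¹) : Matrix (Fin n) (Fin n) ℂ)) = 1 := by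
      rw [← Units.val_mul, ← _root_.map_mul, mul_inv_cancel, _root_.map_one, Units.val_one]
    have hAi : A i = (ρ (w i) : Matrix (Fin n) (Fin n) ℂ) *
        ((ρ m : Matrix (Fin n) (Fin n) ℂ) - 1) *
        ((ρ ((w i)⁻¹) : Matrix (Fin n) (Fin n) ℂ)) := by
      show (ρ (g i) : Matrix (Fin n) (Fin n) ℂ) - 1 = _
      rw [mul_sub, sub_mul, mul_one, hwinv, ← hgi]
    rw [hAi, hm1]
    calc ((ρ (w i) : Matrix (Fin n) (Fin n) ℂ) *
          ((P : Matrix (Fin n) (Fin n) ℂ) *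
            Matrix.diagonal (fun i : Fin n => if (i : ℕ) = 0 then μ₀ - 1 else 0) *
            (↑(P⁻¹) : Matrix (Fin n) (Fin n) ℂ)) *
          ((ρ ((w i)⁻¹) : Matrix (Fin n) (Fin n) ℂ))).rank
        ≤ ((ρ (w i) : Matrix (Fin n) (Fin n) ℂ) *
          ((P : Matrix (Fin n) (Fin n) ℂ) *
            Matrix.diagonal (fun i : Fin n => if (i : ℕ) = 0 then μ₀ - 1 else 0) *
            (↑(P⁻¹) : Matrix (Fin n) (Fin n) ℂ))).rank := Matrix.rank_mul_le_left _ _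
      _ ≤ ((P : Matrix (Fin n) (Fin n) ℂ) *
            Matrix.diagonal (fun i : Fin n => if (i : ℕ) = 0 then μ₀ - 1 else 0) *
            (↑(P⁻¹) : Matrix (Fin n) (Fin n) ℂ)).rank := Matrix.rank_mul_le_right _ _
      _ ≤ ((P : Matrix (Fin n) (Fin n) ℂ) *
            Matrix.diagonal (fun i : Fin n => if (i : ℕ) = 0 then μ₀ - 1 else 0)).rank :=
          Matrix.rank_mul_le_left _ _
      _ ≤ (Matrix.diagonal (fun i : Fin n => if (i : ℕ) = 0 then μ₀ - 1 else 0)).rank :=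
          Matrix.rank_mul_le_right _ _
      _ ≤ 1 := hrankdiag
  -- Step 3: the intersection of kernels
  set K : Fin r → Submodule ℂ (Fin n → ℂ) := fun i => LinearMap.ker (A i).mulVecLin with hK
  have hmem : ∀ (x : Fin n → ℂ) (i : Fin r),
      x ∈ K i ↔ (ρ (g i) : Matrix (Fin n) (Fin n) ℂ) *ᵥ x = x := by
    intro x i
    rw [hK]
    simp only [LinearMap.mem_ker, Matrix.mulVecLin_apply, hA, Matrix.sub_mulVec,
      Matrix.one_mulVec, sub_eq_zero]
  have hKrank : ∀ i, n ≤ Module.finrank ℂ (K i) + 1 := by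
    intro i
    show n ≤ Module.finrank ℂ (LinearMap.ker (A i).mulVecLin) + 1
    have h1 := LinearMap.finrank_range_add_finrank_ker (A i).mulVecLin
    rw [Module.finrank_fin_fun] at h1
    have h2 : Module.finrank ℂ (LinearMap.range (A i).mulVecLin) ≤ 1 := hrank i
    omega
  have hinv : ∀ x ∈ ⨅ i, K i, ∀ γ : G, (ρ γ : Matrix (Fin n) (Fin n) ℂ) *ᵥ x ∈ ⨅ i, K i := by
    intro x hx γ
    rw [Submodule.mem_iInf] at hx
    have hfix := key x (fun i => (hmem x i).mp (hx i))
    rw [hfix γ]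
    exact (Submodule.mem_iInf K).mpr hx
  rcases hirr _ hinv with hbot | htop
  · have hKrank' : ∀ i, Module.finrank ℂ (Fin n → ℂ) ≤ Module.finrank ℂ (K i) + 1 := by
      rw [Module.finrank_fin_fun]; exact hKrank
    have := aux_finrank r K hKrank'
    rw [Module.finrank_fin_fun, hbot, finrank_bot] at this
    simpa using this
  · -- contradiction: ρ m = 1 forces μ₀ = 1
    exfalso
    set i0 : Fin n := ⟨0, hn⟩ with hi0
    set y : Fin n → ℂ := (P : Matrix (Fin n) (Fin n) ℂ) *ᵥ Pi.single i0 1 with hy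
    have hyK : ∀ i, y ∈ K i := (Submodule.mem_iInf K).mp (htop.ge Submodule.mem_top)
    have hfix := key y (fun i => (hmem y i).mp (hyK i)) m
    rw [hdiag, hy] at hfix
    rw [mulVec_mulVec, mul_assoc ((P : Matrix (Fin n) (Fin n) ℂ) *
        Matrix.diagonal (fun i : Fin n => if (i : ℕ) = 0 then μ₀ else 1)),
      hPinv', mul_one, ← mulVec_mulVec, Matrix.diagonal_mulVec_single] at hfix
    have hi0v : (if (i0 : ℕ) = 0 then μ₀ else 1) * 1 = μ₀ := by simp [hi0]
    rw [hi0v] at hfix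
    -- hfix : P *ᵥ Pi.single i0 μ₀ = P *ᵥ Pi.single i0 1
    have hfix2 := congrArg (fun z => (↑(P⁻¹) : Matrix (Fin n) (Fin n) ℂ) *ᵥ z) hfix
    simp only [mulVec_mulVec, hPinv', one_mulVec] at hfix2
    have := congrFun hfix2 i0
    simp only [Pi.single_eq_same] at this
    exact hμ₀ this
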